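/- Let K̂, P̂ be symmetric positive definite n×n real matrices and suppose ‖P̂^{-1}‖_2 ≤ c and ‖K̂^{-1}‖_2 ≤ c for some c > 0. Then the condition number of P̂^{-1/2} K̂ P̂^{-1/2} satisfies κ(P̂^{-1/2} K̂ P̂^{-1/2}) ≤ (1 + c‖K̂ - P̂‖_F)². -/

import Mathlib

open Matrix

/-- Frobenius norm of a real matrix. -/
noncomputable def frobNorm {n m : ℕ} (A : Matrix (Fin n) (Fin m) ℝ) : ℝ :=
  Real.sqrt (∑ i, ∑ j, (A i j) ^ 2)

/-- Spectral (ℓ²-operator) norm of a real matrix. -/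
noncomputable def specNorm {n : ℕ} (M : Matrix (Fin n) (Fin n) ℝ) : ℝ :=
  ‖LinearMap.toContinuousLinearMap (Matrix.toEuclideanLin M)‖

/-- Condition number of a Hermitian matrix: ratio of largest to smallest eigenvalue. -/
noncomputable def condNumber {n : ℕ} (hn : 0 < n) (M : Matrix (Fin n) (Fin n) ℝ)
    (hM : M.IsHermitian) : ℝ :=
  Finset.univ.sup' (Finset.univ_nonempty_iff.mpr ⟨⟨0, hn⟩⟩) hM.eigenvalues /
    Finset.univ.inf' (Finset.univ_nonempty_iff.mpr ⟨⟨0, hn⟩⟩) hM.eigenvalues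

/-- The square root of a positive semidefinite matrix, as `Matrix.PosSemidef.sqrt` was defined
in the older Mathlib. -/
noncomputable def posSemidefSqrt {n : ℕ} {A : Matrix (Fin n) (Fin n) ℝ} (hA : A.PosSemidef) :
    Matrix (Fin n) (Fin n) ℝ :=
  (hA.1.eigenvectorUnitary : Matrix (Fin n) (Fin n) ℝ) *
    diagonal ((RCLike.ofReal : ℝ → ℝ) ∘ (√·) ∘ hA.1.eigenvalues) *
    (star hA.1.eigenvectorUnitary : Matrix (Fin n) (Fin n) ℝ)

open scoped Matrix.Norms.L2Operator

namespace Stmt9Aux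

lemma posSemidefSqrt_posSemidef {n : ℕ} {A : Matrix (Fin n) (Fin n) ℝ} (hA : A.PosSemidef) :
    (posSemidefSqrt hA).PosSemidef := by
  unfold posSemidefSqrt
  have hD : (diagonal ((RCLike.ofReal : ℝ → ℝ) ∘ (√·) ∘ hA.1.eigenvalues)).PosSemidef :=
    Matrix.posSemidef_diagonal_iff.mpr (fun i => Real.sqrt_nonneg _)
  have := hD.mul_mul_conjTranspose_same (hA.1.eigenvectorUnitary : Matrix (Fin n) (Fin n) ℝ)
  simpa [Matrix.star_eq_conjTranspose] using this

lemma posSemidefSqrt_mul_self {n : ℕ} {A : Matrix (Fin n) (Fin n) ℝ} (hA : A.PosSemidef) :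
    posSemidefSqrt hA * posSemidefSqrt hA = A := by
  have hU := Unitary.coe_star_mul_self hA.1.eigenvectorUnitary
  have hD : diagonal ((RCLike.ofReal : ℝ → ℝ) ∘ (√·) ∘ hA.1.eigenvalues) *
      diagonal ((RCLike.ofReal : ℝ → ℝ) ∘ (√·) ∘ hA.1.eigenvalues) =
      diagonal ((RCLike.ofReal : ℝ → ℝ) ∘ hA.1.eigenvalues) := by
    rw [Matrix.diagonal_mul_diagonal]
    congr 1
    funext i
    simp [Real.mul_self_sqrt (hA.eigenvalues_nonneg i)]
  unfold posSemidefSqrt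
  conv_rhs => rw [hA.1.spectral_theorem, Unitary.conjStarAlgAut_apply]
  rw [← hD]
  simp only [mul_assoc]
  rw [← mul_assoc _ (hA.1.eigenvectorUnitary : Matrix (Fin n) (Fin n) ℝ), hU, one_mul]

lemma specNorm_eq {n : ℕ} (A : Matrix (Fin n) (Fin n) ℝ) : specNorm A = ‖A‖ := rfl

/-- embed a plain vector into Euclidean space -/
noncomputable def toE {n : ℕ} (u : Fin n → ℝ) : EuclideanSpace ℝ (Fin n) :=
  (WithLp.equiv 2 _).symm u

lemma toE_dot {n : ℕ} (u w : Fin n → ℝ) : u ⬝ᵥ w = inner ℝ (toE u) (toE w) := by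
  simp [toE, PiLp.inner_apply, dotProduct, RCLike.inner_apply, mul_comm]

lemma norm_toE_sq {n : ℕ} (u : Fin n → ℝ) : ‖toE u‖ ^ 2 = u ⬝ᵥ u := by
  rw [toE_dot, real_inner_self_eq_norm_sq]

lemma mulVec_norm_le {n : ℕ} (A : Matrix (Fin n) (Fin n) ℝ) (u : Fin n → ℝ) :
    ‖toE (A *ᵥ u)‖ ≤ ‖A‖ * ‖toE u‖ := by
  have := Matrix.l2_opNorm_mulVec A (toE u)
  simpa [toE] using this

lemma symm_dot {n : ℕ} {A : Matrix (Fin n) (Fin n) ℝ} (hA : A.IsHermitian)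
    (v w : Fin n → ℝ) : v ⬝ᵥ (A *ᵥ w) = (A *ᵥ v) ⬝ᵥ w := by
  rw [Matrix.dotProduct_mulVec, ← Matrix.mulVec_transpose,
    ← Matrix.conjTranspose_eq_transpose_of_trivial, hA.eq]

lemma norm_le_frobNorm {n : ℕ} (A : Matrix (Fin n) (Fin n) ℝ) : ‖A‖ ≤ frobNorm A := by
  rw [Matrix.l2_opNorm_def]
  refine ContinuousLinearMap.opNorm_le_bound _ (Real.sqrt_nonneg _) fun x => ?_
  have h1 : ((Matrix.toEuclideanLin.trans LinearMap.toContinuousLinearMap A) x :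
      EuclideanSpace ℝ (Fin n)) =
      (WithLp.equiv 2 _).symm (A *ᵥ (WithLp.equiv 2 _) x) := rfl
  rw [h1, EuclideanSpace.norm_eq, EuclideanSpace.norm_eq, frobNorm,
    ← Real.sqrt_mul (by positivity)]
  apply Real.sqrt_le_sqrt
  set w : Fin n → ℝ := (WithLp.equiv 2 _) x with hw
  have hx : ∀ j, w j ^ 2 = ‖x j‖ ^ 2 := fun j => by
    simp [hw, Real.norm_eq_abs, sq_abs]
  calc ∑ i, ‖(WithLp.equiv 2 (Fin n → ℝ)).symm (A *ᵥ w) i‖ ^ 2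
      = ∑ i, (∑ j, A i j * w j) ^ 2 := by
        simp [Real.norm_eq_abs, sq_abs, Matrix.mulVec, dotProduct]
    _ ≤ ∑ i, (∑ j, A i j ^ 2) * (∑ j, w j ^ 2) := by
        refine Finset.sum_le_sum fun i _ => ?_
        exact Finset.sum_mul_sq_le_sq_mul_sq _ _ _
    _ = (∑ i, ∑ j, A i j ^ 2) * ∑ j, ‖x j‖ ^ 2 := by
        rw [← Finset.sum_mul]
        congr 1
        exact Finset.sum_congr rfl fun j _ => hx j

lemma herm_norm_sq {n : ℕ} {A : Matrix (Fin n) (Fin n) ℝ} (hA : A.IsHermitian) :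
    ‖A‖ * ‖A‖ = ‖A * A‖ := by
  rw [← Matrix.l2_opNorm_conjTranspose_mul_self, hA.eq]

end Stmt9Aux

open Stmt9Aux in
theorem stmt_9 {n : ℕ} (hn : 0 < n) (K P : Matrix (Fin n) (Fin n) ℝ)
    (hK : K.PosDef) (hP : P.PosDef) (c : ℝ) (hc : 0 < c)
    (hPinv : specNorm P⁻¹ ≤ c) (hKinv : specNorm K⁻¹ ≤ c)
    (hM : ((posSemidefSqrt hP.posSemidef)⁻¹ * K * (posSemidefSqrt hP.posSemidef)⁻¹).IsHermitian) :
    condNumber hn ((posSemidefSqrt hP.posSemidef)⁻¹ * K * (posSemidefSqrt hP.posSemidef)⁻¹) hM ≤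
      (1 + c * frobNorm (K - P)) ^ 2 := by
  haveI : NeZero n := ⟨hn.ne'⟩
  set S := posSemidefSqrt hP.posSemidef with hSdef
  set M := S⁻¹ * K * S⁻¹ with hMdef
  set B := 1 + c * frobNorm (K - P) with hBdef
  have hfrob0 : 0 ≤ frobNorm (K - P) := Real.sqrt_nonneg _
  have hB1 : 1 ≤ B := by
    have : 0 ≤ c * frobNorm (K - P) := mul_nonneg hc.le hfrob0
    linarith
  have hB0 : 0 < B := lt_of_lt_of_le one_pos hB1
  -- basic facts about S
  have hSps : S.PosSemidef := posSemidefSqrt_posSemidef hP.posSemidef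
  have hSS : S * S = P := posSemidefSqrt_mul_self hP.posSemidef
  have hSdet : IsUnit S.det := by
    have hPdet : IsUnit P.det := (Matrix.isUnit_iff_isUnit_det _).mp hP.isUnit
    rw [← hSS, Matrix.det_mul] at hPdet
    exact (IsUnit.mul_iff.mp hPdet).1
  have hSmulinv : S * S⁻¹ = 1 := Matrix.mul_nonsing_inv S hSdet
  have hSinvmul : S⁻¹ * S = 1 := Matrix.nonsing_inv_mul S hSdet
  have hSinvherm : (S⁻¹).IsHermitian := hSps.1.inv
  have hPinvSS : S⁻¹ * S⁻¹ = P⁻¹ := by rw [← hSS, Matrix.mul_inv_rev]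
  -- facts about T = sqrt K
  set T := posSemidefSqrt hK.posSemidef with hTdef
  have hTps : T.PosSemidef := posSemidefSqrt_posSemidef hK.posSemidef
  have hTT : T * T = K := posSemidefSqrt_mul_self hK.posSemidef
  have hTdet : IsUnit T.det := by
    have hKdet : IsUnit K.det := (Matrix.isUnit_iff_isUnit_det _).mp hK.isUnit
    rw [← hTT, Matrix.det_mul] at hKdet
    exact (IsUnit.mul_iff.mp hKdet).1
  have hTinvmul : T⁻¹ * T = 1 := Matrix.nonsing_inv_mul T hTdet
  have hTinvherm : (T⁻¹).IsHermitian := hTps.1.inv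
  have hKinvTT : T⁻¹ * T⁻¹ = K⁻¹ := by rw [← hTT, Matrix.mul_inv_rev]
  -- spectral norms of inverses
  have hPinv' : ‖P⁻¹‖ ≤ c := by rw [← specNorm_eq]; exact hPinv
  have hKinv' : ‖K⁻¹‖ ≤ c := by rw [← specNorm_eq]; exact hKinv
  have hSinv_sq : ‖S⁻¹‖ * ‖S⁻¹‖ ≤ c := by
    rw [herm_norm_sq hSinvherm, hPinvSS]; exact hPinv'
  have hTinv_sq : ‖T⁻¹‖ * ‖T⁻¹‖ ≤ c := by
    rw [herm_norm_sq hTinvherm, hKinvTT]; exact hKinv'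
  -- upper bound on ‖M‖
  have hid : S⁻¹ * P * S⁻¹ = 1 := by
    rw [← hSS, mul_assoc, mul_assoc, hSmulinv, mul_one, hSinvmul]
  have hMdecomp : M = 1 + S⁻¹ * (K - P) * S⁻¹ := by
    have h2 : S⁻¹ * (K - P) * S⁻¹ = M - 1 := by
      rw [Matrix.mul_sub, Matrix.sub_mul, hid, hMdef]
    rw [h2]; abel
  have hnormM : ‖M‖ ≤ B := by
    calc ‖M‖ = ‖(1 : Matrix (Fin n) (Fin n) ℝ) + S⁻¹ * (K - P) * S⁻¹‖ := by rw [← hMdecomp]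
      _ ≤ ‖(1 : Matrix (Fin n) (Fin n) ℝ)‖ + ‖S⁻¹ * (K - P) * S⁻¹‖ := norm_add_le _ _
      _ = 1 + ‖S⁻¹ * (K - P) * S⁻¹‖ := by rw [norm_one]
      _ ≤ 1 + c * frobNorm (K - P) := by
          gcongr 1 + ?_
          calc ‖S⁻¹ * (K - P) * S⁻¹‖ ≤ ‖S⁻¹ * (K - P)‖ * ‖S⁻¹‖ := Matrix.l2_opNorm_mul _ _
            _ ≤ ‖S⁻¹‖ * ‖K - P‖ * ‖S⁻¹‖ := by
                gcongr; exact Matrix.l2_opNorm_mul _ _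
            _ = ‖S⁻¹‖ * ‖S⁻¹‖ * ‖K - P‖ := by ring
            _ ≤ c * frobNorm (K - P) :=
                mul_le_mul hSinv_sq (norm_le_frobNorm _) (norm_nonneg _) hc.le
  -- eigenvalue bounds
  have hEig : ∀ i, hM.eigenvalues i ≤ B ∧ 1 / B ≤ hM.eigenvalues i := by
    intro i
    set μ := hM.eigenvalues i with hμdef
    set v : Fin n → ℝ := ⇑(hM.eigenvectorBasis i) with hvdef
    have heig : M *ᵥ v = μ • v := hM.mulVec_eigenvectorBasis i
    have hvnorm : ‖toE v‖ = 1 := by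
      have := hM.eigenvectorBasis.orthonormal.1 i
      rw [show toE v = hM.eigenvectorBasis i from rfl]; exact this
    have hvv : v ⬝ᵥ v = 1 := by
      rw [← norm_toE_sq, hvnorm]; norm_num
    -- upper bound
    have hup : μ ≤ B := by
      have h1 : ‖toE (M *ᵥ v)‖ = |μ| := by
        rw [heig]
        have h0 : toE (μ • v) = μ • toE v := rfl
        rw [h0, norm_smul, hvnorm, Real.norm_eq_abs, mul_one]
      have h2 : |μ| ≤ ‖M‖ := by
        have h3 := mulVec_norm_le M v
        rw [h1, hvnorm, mul_one] at h3
        exact h3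
      exact le_trans (le_abs_self μ) (le_trans h2 hnormM)
    refine ⟨hup, ?_⟩
    -- lower bound
    set y := S⁻¹ *ᵥ v with hydef
    have hvSy : S *ᵥ y = v := by
      rw [hydef, Matrix.mulVec_mulVec, hSmulinv, Matrix.one_mulVec]
    have hμval : y ⬝ᵥ (K *ᵥ y) = μ := by
      calc y ⬝ᵥ (K *ᵥ y) = (S⁻¹ *ᵥ v) ⬝ᵥ (K *ᵥ y) := rfl
        _ = v ⬝ᵥ (S⁻¹ *ᵥ (K *ᵥ y)) := (symm_dot hSinvherm v _).symm
        _ = v ⬝ᵥ (M *ᵥ v) := by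
            rw [hMdef, hydef, Matrix.mulVec_mulVec, Matrix.mulVec_mulVec]
        _ = μ := by rw [heig, dotProduct_smul, smul_eq_mul, hvv, mul_one]
    have hPy : y ⬝ᵥ (P *ᵥ y) = 1 := by
      have h1 : P *ᵥ y = S *ᵥ v := by rw [← hSS, ← Matrix.mulVec_mulVec, hvSy]
      calc y ⬝ᵥ (P *ᵥ y) = y ⬝ᵥ (S *ᵥ v) := by rw [h1]
        _ = (S *ᵥ y) ⬝ᵥ v := symm_dot hSps.1 y v
        _ = 1 := by rw [hvSy, hvv]
    set z := T *ᵥ y with hzdef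
    have hμz : z ⬝ᵥ z = μ := by
      calc z ⬝ᵥ z = (T *ᵥ y) ⬝ᵥ z := rfl
        _ = y ⬝ᵥ (T *ᵥ z) := (symm_dot hTps.1 y z).symm
        _ = y ⬝ᵥ (K *ᵥ y) := by rw [hzdef, Matrix.mulVec_mulVec, hTT]
        _ = μ := hμval
    have hyz : y = T⁻¹ *ᵥ z := by
      rw [hzdef, Matrix.mulVec_mulVec, hTinvmul, Matrix.one_mulVec]
    have hzsq : ‖toE z‖ ^ 2 = μ := by rw [norm_toE_sq, hμz]
    have hμ0 : 0 ≤ μ := by rw [← hzsq]; positivity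
    have hy_sq : ‖toE y‖ ^ 2 ≤ c * μ := by
      have h1 : ‖toE y‖ ≤ ‖T⁻¹‖ * ‖toE z‖ := by
        rw [hyz]; exact mulVec_norm_le _ _
      calc ‖toE y‖ ^ 2 ≤ (‖T⁻¹‖ * ‖toE z‖) ^ 2 :=
            pow_le_pow_left₀ (norm_nonneg _) h1 2
        _ = ‖T⁻¹‖ * ‖T⁻¹‖ * ‖toE z‖ ^ 2 := by ring
        _ ≤ c * μ := by
            rw [hzsq]
            exact mul_le_mul_of_nonneg_right hTinv_sq hμ0
    have hdiff : y ⬝ᵥ ((P - K) *ᵥ y) ≤ ‖P - K‖ * (c * μ) := by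
      calc y ⬝ᵥ ((P - K) *ᵥ y) = inner ℝ (toE y) (toE ((P - K) *ᵥ y)) := toE_dot _ _
        _ ≤ ‖toE y‖ * ‖toE ((P - K) *ᵥ y)‖ := real_inner_le_norm _ _
        _ ≤ ‖toE y‖ * (‖P - K‖ * ‖toE y‖) := by
            gcongr
            exact mulVec_norm_le _ _
        _ = ‖P - K‖ * ‖toE y‖ ^ 2 := by ring
        _ ≤ ‖P - K‖ * (c * μ) := mul_le_mul_of_nonneg_left hy_sq (norm_nonneg _)
    have hPK : ‖P - K‖ ≤ frobNorm (K - P) := by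
      have h : ‖P - K‖ = ‖K - P‖ := by rw [← norm_neg]; congr 1; abel
      rw [h]; exact norm_le_frobNorm _
    have hone : 1 ≤ μ * B := by
      have h1 : (1 : ℝ) = μ + y ⬝ᵥ ((P - K) *ᵥ y) := by
        rw [← hPy]
        conv_lhs => rw [show P = K + (P - K) by abel]
        rw [Matrix.add_mulVec, dotProduct_add, hμval]
      have h2 : y ⬝ᵥ ((P - K) *ᵥ y) ≤ frobNorm (K - P) * (c * μ) :=
        le_trans hdiff (mul_le_mul_of_nonneg_right hPK (by positivity))
      calc (1 : ℝ) = μ + y ⬝ᵥ ((P - K) *ᵥ y) := h1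
        _ ≤ μ + frobNorm (K - P) * (c * μ) := by linarith
        _ = μ * B := by rw [hBdef]; ring
    rw [div_le_iff₀ hB0]
    linarith [hone]
  -- assemble
  have hne : (Finset.univ : Finset (Fin n)).Nonempty := Finset.univ_nonempty_iff.mpr ⟨⟨0, hn⟩⟩
  have hsup : Finset.univ.sup' hne hM.eigenvalues ≤ B :=
    Finset.sup'_le _ _ fun i _ => (hEig i).1
  have hinf : 1 / B ≤ Finset.univ.inf' hne hM.eigenvalues :=
    Finset.le_inf' _ _ fun i _ => (hEig i).2
  have hinfpos : 0 < Finset.univ.inf' hne hM.eigenvalues :=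
    lt_of_lt_of_le (by positivity) hinf
  unfold condNumber
  rw [div_le_iff₀ hinfpos]
  calc Finset.univ.sup' hne hM.eigenvalues ≤ B := hsup
    _ = B ^ 2 * (1 / B) := by field_simp
    _ ≤ B ^ 2 * Finset.univ.inf' hne hM.eigenvalues := by
        have : (0:ℝ) ≤ B ^ 2 := sq_nonneg _
        exact mul_le_mul_of_nonneg_left hinf this
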